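/- In the simplicial setup, M_{in_≺(ker π)} = ∪_{n ∈ N₁∪N₂} M_{nS}; that is, a monomial of S lies in the initial ideal in_≺(ker π) if and only if it is divisible by some element of the finite set N₁ ∪ N₂. In particular, there exist n₁, …, n_r ∈ N₁ ∪ N₂ such that in_≺(ker π) = (n₁, …, n_r). -/

import Mathlib

namespace SimplicialToric

/-- `eVec d α i` is `α` times the `i`-th standard basis vector of `ℕ^d`. -/
def eVec (d α : ℕ) (i : Fin d) : Fin d → ℕ := fun j => if j = i then α else 0

/-- The Hilbert basis of a submonoid `B ⊆ ℕ^d`: the set of irreducible elements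
(in `ℕ^d` the only unit is `0`). -/
def Hilb {d : ℕ} (B : AddSubmonoid (Fin d → ℕ)) : Set (Fin d → ℕ) :=
  {b | b ∈ B ∧ b ≠ 0 ∧ ∀ x ∈ B, ∀ y ∈ B, b = x + y → x = 0 ∨ y = 0}

/-- The submonoid `A = Σᵢ ℤ≥0·eᵢ = αℤ≥0^d`. -/
def Amon (d α : ℕ) : AddSubmonoid (Fin d → ℕ) :=
  AddSubmonoid.closure (Set.range (eVec d α))

/-- `B_A = {x ∈ B : x − a ∉ B for every a ∈ A \ {0}}`. -/
def BA {d : ℕ} (B : AddSubmonoid (Fin d → ℕ)) (α : ℕ) : Set (Fin d → ℕ) :=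
  {x | x ∈ B ∧ ∀ z ∈ Amon d α, z ≠ 0 → ∀ y ∈ B, x ≠ y + z}

/-- The generators `a₁,…,a_c,e₁,…,e_d` of `B`, indexed by the variables of
`S = K[x₁,…,x_c,y₁,…,y_d]`; variable `Fin.castAdd d i` is `xᵢ`, variable
`Fin.natAdd c j` is `yⱼ`. -/
def gens (c d α : ℕ) (a : Fin c → Fin d → ℕ) : Fin (c + d) → Fin d → ℕ :=
  Fin.addCases a (eVec d α)

/-- The element of `B` represented by the monomial with exponent vector `σ`:
`π(x^μ y^ν) = t^(valE σ)`. -/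
def valE (c d α : ℕ) (a : Fin c → Fin d → ℕ) (σ : Fin (c + d) →₀ ℕ) : Fin d → ℕ :=
  ∑ v : Fin (c + d), σ v • gens c d α a v

/-- total degree of a monomial (exponent vector). -/
def degE {N : ℕ} (σ : Fin N →₀ ℕ) : ℕ := ∑ v, σ v

/-- the graded reverse lexicographic order: `grevlex σ τ` means `σ ≺ τ`,
i.e. `deg σ < deg τ`, or degrees agree and the last nonzero entry of `τ − σ`
is negative. -/
def grevlex {N : ℕ} (σ τ : Fin N →₀ ℕ) : Prop :=
  degE σ < degE τ ∨ (degE σ = degE τ ∧ ∃ k, τ k < σ k ∧ ∀ l, k < l → σ l = τ l)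

/-- `x ∼ y` iff `x − y ∈ gp(A) = αℤ^d`. -/
def Rel {d : ℕ} (α : ℕ) (x y : Fin d → ℕ) : Prop :=
  ∀ j, (α : ℤ) ∣ (x j : ℤ) - (y j : ℤ)

/-- `Γ` is an equivalence class of `B_A` modulo `αℤ^d`. -/
def IsClass {d : ℕ} (B : AddSubmonoid (Fin d → ℕ)) (α : ℕ) (Γ : Set (Fin d → ℕ)) : Prop :=
  ∃ x ∈ BA B α, Γ = {y | y ∈ BA B α ∧ Rel α x y}

/-- the total order on an equivalence class of `B_A`: `b ≺ c` iff the last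
nonzero entry of `b − c` is negative. -/
def ltCls {d : ℕ} (x y : Fin d → ℕ) : Prop :=
  ∃ k, x k < y k ∧ ∀ l, k < l → x l = y l

/-- `joinSub x y = x∨y − y`, where `x∨y` is the componentwise maximum. -/
def joinSub {d : ℕ} (x y : Fin d → ℕ) : Fin d → ℕ := fun j => max (x j) (y j) - y j

/-- the monomial with exponents `σ` lies in `T = K[y₁,…,y_d]`. -/
def yOnly (c d : ℕ) (σ : Fin (c + d) →₀ ℕ) : Prop := ∀ i : Fin c, σ (Fin.castAdd d i) = 0

/-- the monomial with exponents `σ` involves only the `x`-variables. -/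
def xOnly (c d : ℕ) (σ : Fin (c + d) →₀ ℕ) : Prop := ∀ j : Fin d, σ (Fin.natAdd c j) = 0

/-- the set `N₁`, for a given choice `m` of the minimal monomials `m_b`. -/
def N1set (c d α : ℕ) (a : Fin c → Fin d → ℕ) (B : AddSubmonoid (Fin d → ℕ))
    (m : (Fin d → ℕ) → (Fin (c + d) →₀ ℕ)) : Set (Fin (c + d) →₀ ℕ) :=
  {n | ∃ (i : Fin c) (b : Fin d → ℕ), b ∈ BA B α ∧
    n = Finsupp.single (Fin.castAdd d i) 1 + m b ∧ n ≠ m (a i + b)}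

/-- the set `N₂ = ∪_Γ N_Γ`, where `N_Γ = {n(bᵢ,bⱼ) = m_{bⱼ}·m_{bᵢ∨bⱼ−bⱼ} : bᵢ ≺ bⱼ in Γ}`. -/
def N2set {d : ℕ} (c α : ℕ) (B : AddSubmonoid (Fin d → ℕ))
    (m : (Fin d → ℕ) → (Fin (c + d) →₀ ℕ)) : Set (Fin (c + d) →₀ ℕ) :=
  {n | ∃ Γ, IsClass B α Γ ∧ ∃ bi ∈ Γ, ∃ bj ∈ Γ, ltCls bi bj ∧ n = m bj + m (joinSub bi bj)}

/-- `σ` is the exponent vector of the initial (i.e. `≺`-largest) term of `f`. -/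
def IsLeadMon {N : ℕ} {K : Type*} [Field K] (f : MvPolynomial (Fin N) K)
    (σ : Fin N →₀ ℕ) : Prop :=
  σ ∈ f.support ∧ ∀ τ ∈ f.support, τ = σ ∨ grevlex τ σ

/-- the initial ideal of `I` with respect to the graded reverse lexicographic order. -/
noncomputable def initialIdeal {N : ℕ} {K : Type*} [Field K] (I : Ideal (MvPolynomial (Fin N) K)) :
    Ideal (MvPolynomial (Fin N) K) :=
  Ideal.span {g | ∃ f ∈ I, ∃ σ, IsLeadMon f σ ∧ g = MvPolynomial.monomial σ (1 : K)}

end SimplicialToric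

open SimplicialToric

open SimplicialToric Finsupp

section GrevlexLemmas

variable {N : ℕ}

lemma degE_add (σ τ : Fin N →₀ ℕ) : degE (σ + τ) = degE σ + degE τ := by
  simp [degE, Finset.sum_add_distrib]

lemma grevlex_irrefl (σ : Fin N →₀ ℕ) : ¬ grevlex σ σ := by
  rintro (h | ⟨-, k, hk, -⟩) <;> omega

lemma grevlex_asymm {σ τ : Fin N →₀ ℕ} (h1 : grevlex σ τ) (h2 : grevlex τ σ) : False := by
  rcases h1 with h1 | ⟨hd1, k1, hk1, ha1⟩ <;> rcases h2 with h2 | ⟨hd2, k2, hk2, ha2⟩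
  · omega
  · omega
  · omega
  · rcases lt_trichotomy k1 k2 with h | h | h
    · have := ha1 k2 h; omega
    · subst h; omega
    · have := ha2 k1 h; omega

lemma grevlex_trans {σ τ ρ : Fin N →₀ ℕ} (h1 : grevlex σ τ) (h2 : grevlex τ ρ) :
    grevlex σ ρ := by
  rcases h1 with h1 | ⟨hd1, k1, hk1, ha1⟩ <;> rcases h2 with h2 | ⟨hd2, k2, hk2, ha2⟩
  · exact Or.inl (h1.trans h2)
  · exact Or.inl (by omega)
  · exact Or.inl (by omega)
  · refine Or.inr ⟨hd1.trans hd2, ?_⟩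
    rcases lt_trichotomy k1 k2 with h | h | h
    · exact ⟨k2, by have := ha1 k2 h; omega, fun l hl => (ha1 l (h.trans hl)).trans (ha2 l hl)⟩
    · subst h; exact ⟨k1, by omega, fun l hl => (ha1 l hl).trans (ha2 l hl)⟩
    · exact ⟨k1, by have := ha2 k1 h; omega, fun l hl => (ha1 l hl).trans (ha2 l (h.trans hl))⟩

lemma exists_last_diff (f g : Fin N → ℕ) (k₀ : Fin N) (h : f k₀ ≠ g k₀) :
    ∃ k, k₀ ≤ k ∧ f k ≠ g k ∧ ∀ l, k < l → f l = g l := by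
  classical
  set D := Finset.univ.filter (fun k => f k ≠ g k) with hD
  have hmem : k₀ ∈ D := by simp [hD, h]
  have hne : D.Nonempty := ⟨k₀, hmem⟩
  refine ⟨D.max' hne, D.le_max' _ hmem, ?_, ?_⟩
  · have := D.max'_mem hne; simpa [hD] using this
  · intro l hl
    by_contra hfl
    exact absurd (D.le_max' l (by simp [hD, hfl])) (not_le.mpr hl)

lemma grevlex_total {σ τ : Fin N →₀ ℕ} (hd : degE σ = degE τ) (h : σ ≠ τ) :
    grevlex σ τ ∨ grevlex τ σ := by
  have : ∃ k₀, σ k₀ ≠ τ k₀ := by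
    by_contra hc
    push_neg at hc
    exact h (Finsupp.ext hc)
  obtain ⟨k₀, hk₀⟩ := this
  obtain ⟨k, -, hk, ha⟩ := exists_last_diff σ τ k₀ hk₀
  rcases Nat.lt_or_ge (σ k) (τ k) with h' | h'
  · exact Or.inr (Or.inr ⟨hd.symm, k, h', fun l hl => (ha l hl).symm⟩)
  · exact Or.inl (Or.inr ⟨hd, k, by omega, ha⟩)

lemma grevlex_add_right {σ τ : Fin N →₀ ℕ} (ρ : Fin N →₀ ℕ) (h : grevlex σ τ) :
    grevlex (σ + ρ) (τ + ρ) := by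
  rcases h with h | ⟨hd, k, hk, ha⟩
  · exact Or.inl (by simp [degE_add]; omega)
  · refine Or.inr ⟨by simp [degE_add, hd], k, by simp [hk], fun l hl => by simp [ha l hl]⟩

lemma ltCls_total {d : ℕ} {x y : Fin d → ℕ} (h : x ≠ y) : ltCls x y ∨ ltCls y x := by
  have : ∃ k₀, x k₀ ≠ y k₀ := by
    by_contra hc
    push_neg at hc
    exact h (funext hc)
  obtain ⟨k₀, hk₀⟩ := this
  obtain ⟨k, -, hk, ha⟩ := exists_last_diff x y k₀ hk₀
  rcases Nat.lt_or_ge (x k) (y k) with h' | h'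
  · exact Or.inl ⟨k, h', ha⟩
  · exact Or.inr ⟨k, by omega, fun l hl => (ha l hl).symm⟩

end GrevlexLemmas

section Coords

variable {c d α : ℕ} {a : Fin c → Fin d → ℕ}

def xhat {c d : ℕ} (σ : Fin (c + d) →₀ ℕ) : Fin c → ℕ := fun i => σ (Fin.castAdd d i)

def yhat {c d : ℕ} (σ : Fin (c + d) →₀ ℕ) : Fin d → ℕ := fun j => σ (Fin.natAdd c j)

noncomputable def xMon (c d : ℕ) (ξ : Fin c → ℕ) : Fin (c + d) →₀ ℕ :=
  ∑ i, Finsupp.single (Fin.castAdd d i) (ξ i)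

noncomputable def yMon (c d : ℕ) (w : Fin d → ℕ) : Fin (c + d) →₀ ℕ :=
  ∑ j, Finsupp.single (Fin.natAdd c j) (w j)

lemma natAdd_inj {j j' : Fin d} : (Fin.natAdd c j = Fin.natAdd c j') ↔ j = j' := by
  constructor
  · intro h
    have := congrArg Fin.val h
    simp [Fin.natAdd] at this
    exact Fin.ext this
  · rintro rfl; rfl

lemma castAdd_inj {i i' : Fin c} : (Fin.castAdd d i = Fin.castAdd d i') ↔ i = i' := by
  constructor
  · intro h
    have := congrArg Fin.val h
    simp [Fin.castAdd] at this
    exact Fin.ext this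
  · rintro rfl; rfl

lemma castAdd_ne_natAdd {i : Fin c} {j : Fin d} : Fin.castAdd d i ≠ Fin.natAdd c j := by
  intro h
  have := congrArg Fin.val h
  have hi := i.isLt
  simp [Fin.castAdd, Fin.natAdd, Fin.castLE] at this
  omega

lemma yMon_apply_natAdd (w : Fin d → ℕ) (j : Fin d) :
    yMon c d w (Fin.natAdd c j) = w j := by
  classical
  rw [yMon, Finsupp.finset_sum_apply]
  rw [Finset.sum_eq_single_of_mem j (Finset.mem_univ j)]
  · simp
  · intro j' _ hne
    rw [Finsupp.single_apply, if_neg (by simp [natAdd_inj, hne])]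

lemma yMon_apply_castAdd (w : Fin d → ℕ) (i : Fin c) :
    yMon c d w (Fin.castAdd d i) = 0 := by
  classical
  rw [yMon, Finsupp.finset_sum_apply]
  apply Finset.sum_eq_zero
  intro j' _
  rw [Finsupp.single_apply, if_neg (fun h => castAdd_ne_natAdd h.symm)]

lemma xMon_apply_castAdd (ξ : Fin c → ℕ) (i : Fin c) :
    xMon c d ξ (Fin.castAdd d i) = ξ i := by
  classical
  rw [xMon, Finsupp.finset_sum_apply]
  rw [Finset.sum_eq_single_of_mem i (Finset.mem_univ i)]
  · simp
  · intro i' _ hne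
    rw [Finsupp.single_apply, if_neg (by simp [castAdd_inj, hne])]

lemma xMon_apply_natAdd (ξ : Fin c → ℕ) (j : Fin d) :
    xMon c d ξ (Fin.natAdd c j) = 0 := by
  classical
  rw [xMon, Finsupp.finset_sum_apply]
  apply Finset.sum_eq_zero
  intro i' _
  rw [Finsupp.single_apply, if_neg castAdd_ne_natAdd]

lemma decompE (σ : Fin (c + d) →₀ ℕ) : σ = xMon c d (xhat σ) + yMon c d (yhat σ) := by
  ext v
  induction v using Fin.addCases with
  | left i => simp [xMon_apply_castAdd, yMon_apply_castAdd, xhat]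
  | right j => simp [xMon_apply_natAdd, yMon_apply_natAdd, yhat]

lemma finsupp_ext_coords {σ τ : Fin (c + d) →₀ ℕ} (hx : xhat σ = xhat τ)
    (hy : yhat σ = yhat τ) : σ = τ := by
  ext v
  induction v using Fin.addCases with
  | left i => exact congrFun hx i
  | right j => exact congrFun hy j

lemma valE_coord (σ : Fin (c + d) →₀ ℕ) (j : Fin d) :
    valE c d α a σ j = (∑ i, xhat σ i * a i j) + α * yhat σ j := by
  classical
  rw [valE, Finset.sum_apply, Fin.sum_univ_add]
  congr 1
  · apply Finset.sum_congr rfl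
    intro i _
    simp [gens, xhat, Fin.addCases_left]
  · rw [Finset.sum_eq_single_of_mem j (Finset.mem_univ j)]
    · simp [gens, Fin.addCases_right, eVec, yhat, Nat.mul_comm]
    · intro j' _ hne
      simp [gens, Fin.addCases_right, eVec, Ne.symm hne]

lemma valE_add (σ τ : Fin (c + d) →₀ ℕ) :
    valE c d α a (σ + τ) = valE c d α a σ + valE c d α a τ := by
  funext j
  rw [Pi.add_apply, valE_coord, valE_coord, valE_coord]
  simp only [xhat, yhat, Finsupp.add_apply, add_mul]
  rw [Finset.sum_add_distrib]
  ring

lemma valE_yMon (w : Fin d → ℕ) : valE c d α a (yMon c d w) = fun j => α * w j := by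
  funext j
  rw [valE_coord]
  simp [xhat, yhat, yMon_apply_castAdd, yMon_apply_natAdd]

lemma valE_single_castAdd (i : Fin c) :
    valE c d α a (Finsupp.single (Fin.castAdd d i) 1) = a i := by
  funext j
  rw [valE_coord]
  classical
  simp only [xhat, yhat, Finsupp.single_apply]
  rw [Finset.sum_eq_single_of_mem i (Finset.mem_univ i)]
  · simp [if_neg castAdd_ne_natAdd]
  · intro i' _ hne
    rw [if_neg (by simp [castAdd_inj, Ne.symm hne]), zero_mul]

lemma degE_split (σ : Fin (c + d) →₀ ℕ) :
    degE σ = (∑ i, xhat σ i) + ∑ j, yhat σ j := by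
  rw [degE, Fin.sum_univ_add]; rfl

lemma sum_valE (hdeg : ∀ i, ∑ j, a i j = α) (σ : Fin (c + d) →₀ ℕ) :
    ∑ j, valE c d α a σ j = α * degE σ := by
  have h1 : ∑ j, valE c d α a σ j
      = ∑ j, ((∑ i, xhat σ i * a i j) + α * yhat σ j) :=
    Finset.sum_congr rfl (fun j _ => valE_coord σ j)
  rw [h1, Finset.sum_add_distrib, Finset.sum_comm, degE_split, Nat.mul_add, ← Finset.mul_sum]
  congr 1
  rw [Finset.mul_sum]
  apply Finset.sum_congr rfl
  intro i _
  rw [← Finset.mul_sum, hdeg i, mul_comm]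

lemma degE_eq_of_valE_eq (hα : 0 < α) (hdeg : ∀ i, ∑ j, a i j = α)
    {σ τ : Fin (c + d) →₀ ℕ} (h : valE c d α a σ = valE c d α a τ) : degE σ = degE τ := by
  have h1 := sum_valE (a := a) hdeg σ
  have h2 := sum_valE (a := a) hdeg τ
  rw [h] at h1
  exact Nat.eq_of_mul_eq_mul_left hα (h1.symm.trans h2)

lemma valE_mem {B : AddSubmonoid (Fin d → ℕ)}
    (hBgen : B = AddSubmonoid.closure (Set.range a ∪ Set.range (eVec d α)))
    (σ : Fin (c + d) →₀ ℕ) : valE c d α a σ ∈ B := by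
  rw [valE]
  apply AddSubmonoid.sum_mem
  intro v _
  apply AddSubmonoid.nsmul_mem
  induction v using Fin.addCases with
  | left i =>
    rw [gens, Fin.addCases_left, hBgen]
    exact AddSubmonoid.subset_closure (Or.inl ⟨i, rfl⟩)
  | right j =>
    rw [gens, Fin.addCases_right, hBgen]
    exact AddSubmonoid.subset_closure (Or.inr ⟨j, rfl⟩)

end Coords

section Core

variable {c d α : ℕ} {a : Fin c → Fin d → ℕ} {B : AddSubmonoid (Fin d → ℕ)}
  {m : (Fin d → ℕ) → (Fin (c + d) →₀ ℕ)}

lemma degE_single (k : Fin (c + d)) (r : ℕ) : degE (Finsupp.single k r) = r := by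
  classical
  rw [degE, Finset.sum_eq_single_of_mem k (Finset.mem_univ k)]
  · simp
  · intro v _ hv
    rw [Finsupp.single_apply, if_neg (Ne.symm hv)]

lemma exists_natAdd {l : Fin (c + d)} (h : c ≤ (l : ℕ)) : ∃ j : Fin d, l = Fin.natAdd c j := by
  have hl := l.isLt
  refine ⟨⟨(l : ℕ) - c, by omega⟩, ?_⟩
  apply Fin.ext
  simp [Fin.natAdd]
  omega

lemma xhat_xMon (ξ : Fin c → ℕ) : xhat (xMon c d ξ) = ξ :=
  funext fun i => xMon_apply_castAdd ξ i

lemma yhat_xMon (ξ : Fin c → ℕ) : yhat (xMon c d ξ) = 0 :=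
  funext fun j => xMon_apply_natAdd ξ j

lemma xhat_yMon (w : Fin d → ℕ) : xhat (yMon c d w) = 0 :=
  funext fun i => yMon_apply_castAdd w i

lemma yhat_yMon (w : Fin d → ℕ) : yhat (yMon c d w) = w :=
  funext fun j => yMon_apply_natAdd w j

lemma yMon_zero : yMon c d 0 = 0 := by
  simp [yMon]

/-- uniqueness of the minimum: if every other element of the fiber is `≻ σ`, then `σ = m b`. -/
lemma eq_minfib (hmval : ∀ b ∈ B, valE c d α a (m b) = b)
    (hmmin : ∀ b ∈ B, ∀ σ, valE c d α a σ = b → m b = σ ∨ grevlex (m b) σ)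
    {b : Fin d → ℕ} {σ : Fin (c + d) →₀ ℕ} (hb : b ∈ B) (hσ : valE c d α a σ = b)
    (hmin : ∀ τ, valE c d α a τ = b → τ ≠ σ → grevlex σ τ) : σ = m b := by
  rcases hmmin b hb σ hσ with h | h
  · exact h.symm
  · by_cases he : m b = σ
    · exact he.symm
    · exact absurd (hmin (m b) (hmval b hb) he) (fun h' => grevlex_asymm h h')

lemma Amon_exists {z : Fin d → ℕ} (hz : z ∈ Amon d α) :
    ∃ w : Fin d → ℕ, z = fun j => α * w j := by
  induction hz using AddSubmonoid.closure_induction with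
  | mem x hx =>
    obtain ⟨i, rfl⟩ := hx
    refine ⟨fun j => if j = i then 1 else 0, funext fun j => ?_⟩
    by_cases h : j = i <;> simp [eVec, h]
  | zero => exact ⟨0, funext fun j => by simp⟩
  | add x y' _ _ hx hy =>
    obtain ⟨w1, rfl⟩ := hx
    obtain ⟨w2, rfl⟩ := hy
    exact ⟨w1 + w2, funext fun j => by simp [Nat.mul_add]⟩

/-- Lemma F : a monomial in the `y`-variables only is the minimum of its fiber. -/
lemma pureY_min (hα : 0 < α)
    (hBgen : B = AddSubmonoid.closure (Set.range a ∪ Set.range (eVec d α)))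
    (hdeg : ∀ i, ∑ j, a i j = α)
    (hmval : ∀ b ∈ B, valE c d α a (m b) = b)
    (hmmin : ∀ b ∈ B, ∀ σ, valE c d α a σ = b → m b = σ ∨ grevlex (m b) σ)
    (σ : Fin (c + d) →₀ ℕ) (hx : ∀ i : Fin c, σ (Fin.castAdd d i) = 0) :
    σ = m (valE c d α a σ) := by
  apply eq_minfib hmval hmmin (valE_mem hBgen σ) rfl
  intro τ hτ hne
  have hd : degE σ = degE τ := (degE_eq_of_valE_eq hα hdeg hτ).symm
  have hcoord : ∀ j, (∑ i, xhat τ i * a i j) + α * yhat τ j = α * yhat σ j := by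
    intro j
    have h1 := valE_coord (α := α) (a := a) τ j
    have h2 := valE_coord (α := α) (a := a) σ j
    have h3 : ∀ i : Fin c, xhat σ i * a i j = 0 := fun i => by
      simp [xhat, hx i]
    rw [hτ] at h1
    rw [Finset.sum_congr rfl (fun i _ => h3 i), Finset.sum_const_zero, zero_add] at h2
    omega
  have hyle : ∀ j, yhat τ j ≤ yhat σ j := by
    intro j
    have := hcoord j
    have := Nat.le_of_mul_le_mul_left (show α * yhat τ j ≤ α * yhat σ j by omega) hα
    exact this
  have hyne : yhat τ ≠ yhat σ := by
    intro hy
    apply hne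
    apply finsupp_ext_coords ?_ hy
    -- xhat τ = xhat σ = 0
    have hds := degE_split σ
    have hdt := degE_split τ
    have hsx : ∑ i, xhat σ i = 0 := Finset.sum_eq_zero (fun i _ => by simp [xhat, hx i])
    have htx : ∑ i, xhat τ i = 0 := by
      rw [hy] at hdt
      omega
    funext i
    have h1 : xhat τ i = 0 := by
      have := Finset.sum_eq_zero_iff.mp htx i (Finset.mem_univ i)
      exact this
    have h2 : xhat σ i = 0 := by simp [xhat, hx i]
    rw [h1, h2]
  have : ∃ j₀, σ (Fin.natAdd c j₀) ≠ τ (Fin.natAdd c j₀) := by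
    by_contra hc
    push_neg at hc
    exact hyne (funext fun j => (hc j).symm)
  obtain ⟨j₀, hj₀⟩ := this
  obtain ⟨k, hk₀le, hkne, hktail⟩ := exists_last_diff σ τ (Fin.natAdd c j₀) hj₀
  have hkc : c ≤ (k : ℕ) := by
    have := Fin.le_def.mp hk₀le
    simp [Fin.natAdd] at this
    omega
  obtain ⟨j', hj'⟩ := exists_natAdd hkc
  have hklt : τ k < σ k := by
    have := hyle j'
    simp only [yhat] at this
    rw [hj'] at hkne ⊢
    omega
  exact Or.inr ⟨hd, k, hklt, hktail⟩

/-- Lemma H : any monomial whose value lies in `B_A` involves only `x`-variables. -/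
lemma BA_pureX (hα : 0 < α)
    (hBgen : B = AddSubmonoid.closure (Set.range a ∪ Set.range (eVec d α)))
    {σ : Fin (c + d) →₀ ℕ} (hbA : valE c d α a σ ∈ BA B α) :
    ∀ j, σ (Fin.natAdd c j) = 0 := by
  intro j₀
  by_contra hj₀
  have hle : Finsupp.single (Fin.natAdd c j₀) 1 ≤ σ :=
    Finsupp.single_le_iff.mpr (by omega)
  obtain ⟨ρ, hρ⟩ := le_iff_exists_add.mp hle
  have hsingle : valE c d α a (Finsupp.single (Fin.natAdd c j₀) 1) = eVec d α j₀ := by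
    funext j
    rw [valE_coord]
    classical
    have hx : ∀ i : Fin c, xhat (Finsupp.single (Fin.natAdd c j₀) (1:ℕ)) i = 0 := by
      intro i
      simp only [xhat, Finsupp.single_apply]
      rw [if_neg (fun h => castAdd_ne_natAdd h.symm)]
    rw [Finset.sum_congr rfl (fun i _ => by rw [hx i, zero_mul]), Finset.sum_const_zero, zero_add]
    simp only [yhat, Finsupp.single_apply, eVec]
    by_cases h : j = j₀
    · subst h; rw [if_pos rfl, if_pos rfl, mul_one]
    · rw [if_neg (by simp [natAdd_inj]; exact fun hh => h hh.symm), if_neg h, mul_zero]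
  exact hbA.2 (eVec d α j₀) (AddSubmonoid.subset_closure ⟨j₀, rfl⟩)
    (fun h0 => by have := congrFun h0 j₀; simp [eVec] at this; omega)
    (valE c d α a ρ) (valE_mem hBgen ρ)
    (by rw [hρ, valE_add, hsingle, add_comm])

/-- Claim G : a divisor of a minimal monomial is minimal. -/
lemma min_divisor (hBgen : B = AddSubmonoid.closure (Set.range a ∪ Set.range (eVec d α)))
    (hmval : ∀ b ∈ B, valE c d α a (m b) = b)
    (hmmin : ∀ b ∈ B, ∀ σ, valE c d α a σ = b → m b = σ ∨ grevlex (m b) σ)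
    {σ ρ δ : Fin (c + d) →₀ ℕ} (hsum : σ = ρ + δ) (hσ : σ = m (valE c d α a σ)) :
    ρ = m (valE c d α a ρ) := by
  rcases hmmin (valE c d α a ρ) (valE_mem hBgen ρ) ρ rfl with h | h
  · exact h.symm
  · exfalso
    set μ := m (valE c d α a ρ) + δ with hμdef
    have hμval : valE c d α a μ = valE c d α a σ := by
      rw [hμdef, valE_add, hmval _ (valE_mem hBgen ρ), hsum, valE_add]
    have hgl : grevlex μ σ := by
      rw [hsum]
      exact grevlex_add_right δ h
    rcases hmmin (valE c d α a σ) (valE_mem hBgen σ) μ hμval with h' | h'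
    · rw [← hσ] at h'
      rw [← h'] at hgl
      exact grevlex_irrefl σ hgl
    · rw [← hσ] at h'
      exact grevlex_asymm h' hgl

/-- Lemma E : the value of the `x`-part of a minimal monomial lies in `B_A`. -/
lemma xval_mem_BA (hα : 0 < α)
    (hBgen : B = AddSubmonoid.closure (Set.range a ∪ Set.range (eVec d α)))
    (hdeg : ∀ i, ∑ j, a i j = α)
    (hmval : ∀ b ∈ B, valE c d α a (m b) = b)
    (hmmin : ∀ b ∈ B, ∀ σ, valE c d α a σ = b → m b = σ ∨ grevlex (m b) σ)
    {σ : Fin (c + d) →₀ ℕ} (hσ : σ = m (valE c d α a σ)) :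
    valE c d α a (xMon c d (xhat σ)) ∈ BA B α := by
  by_contra hc
  have hmem : valE c d α a (xMon c d (xhat σ)) ∈ B := valE_mem hBgen _
  rw [BA, Set.mem_setOf_eq] at hc
  push_neg at hc
  obtain ⟨z, hzA, hz0, y, hyB, hyz⟩ := hc hmem
  obtain ⟨w, rfl⟩ := Amon_exists hzA
  have hw0 : ∃ j₁, w j₁ ≠ 0 := by
    by_contra hcw
    push_neg at hcw
    exact hz0 (funext fun j => by simp [hcw j])
  obtain ⟨j₁, hj₁⟩ := hw0
  -- the competing monomial
  set τ := m y + yMon c d (fun j => w j + yhat σ j) with hτdef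
  have hyMonval : valE c d α a (yMon c d (fun j => w j + yhat σ j))
      = (fun j => α * w j) + valE c d α a (yMon c d (yhat σ)) := by
    rw [valE_yMon, valE_yMon]
    funext j
    simp [Nat.mul_add]
  have hσval : valE c d α a σ
      = valE c d α a (xMon c d (xhat σ)) + valE c d α a (yMon c d (yhat σ)) := by
    conv_lhs => rw [decompE σ]
    rw [valE_add]
  have hτval : valE c d α a τ = valE c d α a σ := by
    rw [hτdef, valE_add, hmval y hyB, hyMonval, hσval, hyz, ← add_assoc]
  have hdeg' : degE τ = degE σ := degE_eq_of_valE_eq hα hdeg hτval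
  have hτy : ∀ j, τ (Fin.natAdd c j) = yhat (m y) j + (w j + yhat σ j) := by
    intro j
    rw [hτdef, Finsupp.add_apply, yMon_apply_natAdd]
    rfl
  have hyhat : ∀ j, yhat σ j = σ (Fin.natAdd c j) := fun j => rfl
  have hge : ∀ j, σ (Fin.natAdd c j) ≤ τ (Fin.natAdd c j) := by
    intro j
    rw [hτy j]
    have := hyhat j
    omega
  have hstrict : σ (Fin.natAdd c j₁) ≠ τ (Fin.natAdd c j₁) := by
    rw [hτy j₁]
    have := hyhat j₁
    omega
  obtain ⟨k, hk₀le, hkne, hktail⟩ := exists_last_diff σ τ (Fin.natAdd c j₁) hstrict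
  have hkc : c ≤ (k : ℕ) := by
    have := Fin.le_def.mp hk₀le
    simp [Fin.natAdd] at this
    omega
  obtain ⟨j', rfl⟩ := exists_natAdd hkc
  have hklt : σ (Fin.natAdd c j') < τ (Fin.natAdd c j') := by
    have := hge j'
    omega
  have hgl : grevlex τ σ :=
    Or.inr ⟨hdeg', Fin.natAdd c j', hklt, fun l hl => (hktail l hl).symm⟩
  rcases hmmin (valE c d α a σ) (valE_mem hBgen σ) τ hτval with h' | h'
  · rw [← hσ] at h'
    exact hkne (by rw [h'])
  · rw [← hσ] at h'
    exact grevlex_asymm h' hgl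

lemma rel_refl (x : Fin d → ℕ) : Rel α x x := fun j => by simp

lemma rel_symm {x y : Fin d → ℕ} (h : Rel α x y) : Rel α y x := fun j =>
  (dvd_sub_comm).mp (h j)

lemma joinSub_alpha (hα : 0 < α) {bi bj : Fin d → ℕ} (hrel : Rel α bi bj) :
    ∃ w : Fin d → ℕ, ∀ j, joinSub bi bj j = α * w j := by
  have hd : ∀ j, α ∣ joinSub bi bj j := by
    intro j
    rcases le_total (bi j) (bj j) with h | h
    · have : joinSub bi bj j = 0 := by simp [joinSub]; omega
      rw [this]
      exact dvd_zero α
    · have : joinSub bi bj j = bi j - bj j := by simp [joinSub]; omega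
      rw [this]
      have hz := hrel j
      have : ((bi j - bj j : ℕ) : ℤ) = (bi j : ℤ) - bj j := by
        push_cast
        omega
      rw [← this] at hz
      exact_mod_cast hz
  exact ⟨fun j => joinSub bi bj j / α, fun j => (Nat.mul_div_cancel' (hd j)).symm⟩

/-- Lemma C : elements of `N₂` are not minimal in their fibers. -/
lemma n2_ne_min (hα : 0 < α)
    (hBgen : B = AddSubmonoid.closure (Set.range a ∪ Set.range (eVec d α)))
    (hdeg : ∀ i, ∑ j, a i j = α)
    (hmval : ∀ b ∈ B, valE c d α a (m b) = b)
    (hmmin : ∀ b ∈ B, ∀ σ, valE c d α a σ = b → m b = σ ∨ grevlex (m b) σ)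
    {bi bj : Fin d → ℕ} (hi : bi ∈ BA B α) (hj : bj ∈ BA B α)
    (hrel : Rel α bi bj) (hlt : ltCls bi bj) :
    m bj + m (joinSub bi bj) ≠ m (valE c d α a (m bj + m (joinSub bi bj))) := by
  obtain ⟨u, hu⟩ := joinSub_alpha hα hrel
  obtain ⟨v, hv⟩ := joinSub_alpha hα (rel_symm hrel)
  -- m of the joinSubs are the corresponding pure-y monomials
  have hvalu : valE c d α a (yMon c d u) = joinSub bi bj := by
    rw [valE_yMon]; exact funext fun j => (hu j).symm
  have hvalv : valE c d α a (yMon c d v) = joinSub bj bi := by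
    rw [valE_yMon]; exact funext fun j => (hv j).symm
  have hmu : m (joinSub bi bj) = yMon c d u := by
    rw [← hvalu]
    exact (pureY_min hα hBgen hdeg hmval hmmin _ (fun i => yMon_apply_castAdd u i)).symm
  have hmv : m (joinSub bj bi) = yMon c d v := by
    rw [← hvalv]
    exact (pureY_min hα hBgen hdeg hmval hmmin _ (fun i => yMon_apply_castAdd v i)).symm
  -- values
  have hvali : valE c d α a (m bi) = bi := hmval bi hi.1
  have hvalj : valE c d α a (m bj) = bj := hmval bj hj.1
  set n := m bj + m (joinSub bi bj) with hndef
  set n' := m bi + m (joinSub bj bi) with hn'def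
  have hvaln : valE c d α a n = fun j => max (bi j) (bj j) := by
    rw [hndef, valE_add, hvalj, hmu, hvalu]
    funext j
    simp only [Pi.add_apply, joinSub]
    omega
  have hvaln' : valE c d α a n' = fun j => max (bi j) (bj j) := by
    rw [hn'def, valE_add, hvali, hmv, hvalv]
    funext j
    simp only [Pi.add_apply, joinSub]
    omega
  have hval_eq : valE c d α a n' = valE c d α a n := by rw [hvaln, hvaln']
  have hdeg' : degE n' = degE n := degE_eq_of_valE_eq hα hdeg hval_eq
  -- pure-x of m bi, m bj
  have hpi : ∀ j, (m bi) (Fin.natAdd c j) = 0 :=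
    BA_pureX hα hBgen (by rw [hvali]; exact hi)
  have hpj : ∀ j, (m bj) (Fin.natAdd c j) = 0 :=
    BA_pureX hα hBgen (by rw [hvalj]; exact hj)
  -- coordinates at y-positions
  have hny : ∀ j, n (Fin.natAdd c j) = u j := by
    intro j
    rw [hndef, Finsupp.add_apply, hpj j, hmu, yMon_apply_natAdd, zero_add]
  have hn'y : ∀ j, n' (Fin.natAdd c j) = v j := by
    intro j
    rw [hn'def, Finsupp.add_apply, hpi j, hmv, yMon_apply_natAdd, zero_add]
  obtain ⟨k₀, hk₀lt, hk₀tail⟩ := hlt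
  have hgl : grevlex n' n := by
    refine Or.inr ⟨hdeg', Fin.natAdd c k₀, ?_, ?_⟩
    · rw [hny k₀, hn'y k₀]
      have h1 := hu k₀
      have h2 := hv k₀
      have h3 : joinSub bi bj k₀ = 0 := by simp [joinSub]; omega
      have h4 : 0 < joinSub bj bi k₀ := by simp [joinSub]; omega
      have hu0 : u k₀ = 0 := by
        rcases Nat.mul_eq_zero.mp (h1 ▸ h3) with h | h
        · omega
        · exact h
      have hv0 : 0 < v k₀ := by
        rcases Nat.eq_zero_or_pos (v k₀) with h | h
        · rw [h2, h, Nat.mul_zero] at h4; omega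
        · exact h
      omega
    · intro l hl
      have hlc : c ≤ (l : ℕ) := by
        have := Fin.lt_def.mp hl
        simp [Fin.natAdd] at this
        omega
      obtain ⟨j', rfl⟩ := exists_natAdd hlc
      have hj'k : k₀ < j' := by
        have := Fin.lt_def.mp hl
        simp [Fin.natAdd] at this
        exact Fin.lt_def.mpr this
      rw [hny j', hn'y j']
      have heq : bi j' = bj j' := hk₀tail j' hj'k
      have h1 := hu j'
      have h2 := hv j'
      have h3 : joinSub bi bj j' = joinSub bj bi j' := by simp [joinSub, heq]
      have : α * u j' = α * v j' := by rw [← h1, ← h2, h3]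
      exact (Nat.eq_of_mul_eq_mul_left hα this).symm
  -- conclude
  intro heq
  rcases hmmin (valE c d α a n) (valE_mem hBgen n) n' hval_eq with h' | h'
  · rw [← heq] at h'
    rw [h'] at hgl
    exact grevlex_irrefl n' hgl
  · rw [← heq] at h'
    exact grevlex_asymm h' hgl

/-- The key lemma: a monomial not divisible by any element of `N₁ ∪ N₂` is the
minimum of its fiber. -/
lemma standard_min (hα : 0 < α)
    (hBgen : B = AddSubmonoid.closure (Set.range a ∪ Set.range (eVec d α)))
    (hdeg : ∀ i, ∑ j, a i j = α)
    (hmval : ∀ b ∈ B, valE c d α a (m b) = b)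
    (hmmin : ∀ b ∈ B, ∀ σ, valE c d α a σ = b → m b = σ ∨ grevlex (m b) σ) :
    ∀ σ : Fin (c + d) →₀ ℕ,
      (∀ n ∈ N1set c d α a B m ∪ N2set c α B m, ¬ n ≤ σ) →
      σ = m (valE c d α a σ) := by
  suffices H : ∀ D : ℕ, ∀ σ : Fin (c + d) →₀ ℕ, degE σ ≤ D →
      (∀ n ∈ N1set c d α a B m ∪ N2set c α B m, ¬ n ≤ σ) →
      σ = m (valE c d α a σ) by
    exact fun σ h => H (degE σ) σ le_rfl h
  intro D
  induction D with
  | zero =>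
    intro σ hD _
    apply pureY_min hα hBgen hdeg hmval hmmin
    intro i
    have : σ (Fin.castAdd d i) ≤ degE σ :=
      Finset.single_le_sum (fun v _ => Nat.zero_le _) (Finset.mem_univ _)
    omega
  | succ D ih =>
    intro σ hD hnd
    by_cases hx : ∀ i : Fin c, σ (Fin.castAdd d i) = 0
    · exact pureY_min hα hBgen hdeg hmval hmmin σ hx
    push_neg at hx
    obtain ⟨i, hi⟩ := hx
    by_cases hy : ∀ j : Fin d, σ (Fin.natAdd c j) = 0
    · -- pure x : the `N₁` case
      have hle : Finsupp.single (Fin.castAdd d i) 1 ≤ σ :=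
        Finsupp.single_le_iff.mpr (by omega)
      obtain ⟨σ₁, hσ₁⟩ := le_iff_exists_add.mp hle
      have hσ₁le : σ₁ ≤ σ := by rw [hσ₁]; exact le_add_self
      have hdeg₁ : degE σ₁ ≤ D := by
        have h0 := degE_add (Finsupp.single (Fin.castAdd d i) (1:ℕ)) σ₁
        rw [← hσ₁, degE_single] at h0
        omega
      have h1 : σ₁ = m (valE c d α a σ₁) :=
        ih σ₁ hdeg₁ (fun n hn h' => hnd n hn (h'.trans hσ₁le))
      have hy₁ : ∀ j, σ₁ (Fin.natAdd c j) = 0 := by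
        intro j
        have h2 := Finsupp.le_def.mp hσ₁le (Fin.natAdd c j)
        have h3 := hy j
        omega
      have hxm : xMon c d (xhat σ₁) = σ₁ := by
        have h2 := decompE σ₁
        have hy0 : yhat σ₁ = 0 := funext fun j => hy₁ j
        rw [hy0, yMon_zero, add_zero] at h2
        exact h2.symm
      have hBA : valE c d α a σ₁ ∈ BA B α := by
        have h2 := xval_mem_BA hα hBgen hdeg hmval hmmin h1
        rwa [hxm] at h2
      by_contra hne
      have hval : valE c d α a σ = a i + valE c d α a σ₁ := by
        rw [hσ₁, valE_add, valE_single_castAdd]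
      refine hnd (Finsupp.single (Fin.castAdd d i) 1 + m (valE c d α a σ₁))
        (Or.inl ⟨i, valE c d α a σ₁, hBA, rfl, ?_⟩) ?_
      · rw [← h1, ← hσ₁, ← hval]
        exact hne
      · rw [← h1, ← hσ₁]
    · -- mixed case : both x- and y-variables occur
      push_neg at hy
      obtain ⟨j₁, hj₁⟩ := hy
      have hdcmp : σ = xMon c d (xhat σ) + yMon c d (yhat σ) := decompE σ
      have hξle : xMon c d (xhat σ) ≤ σ := by
        conv_rhs => rw [hdcmp]
        exact le_self_add
      have hdegη : 0 < degE (yMon c d (yhat σ)) := by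
        have h1 : degE (yMon c d (yhat σ)) = (∑ _i' : Fin c, (0:ℕ)) + ∑ j, yhat σ j := by
          rw [degE_split, xhat_yMon, yhat_yMon]
          rfl
        have h2 : 0 < yhat σ j₁ := by
          have h3 : yhat σ j₁ = σ (Fin.natAdd c j₁) := rfl
          omega
        have h3 : yhat σ j₁ ≤ ∑ j, yhat σ j :=
          Finset.single_le_sum (fun v _ => Nat.zero_le _) (Finset.mem_univ _)
        simp only [Finset.sum_const_zero] at h1
        omega
      have hdegξ : degE (xMon c d (xhat σ)) ≤ D := by
        have h0 := degE_add (xMon c d (xhat σ)) (yMon c d (yhat σ))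
        rw [← hdcmp] at h0
        omega
      have hξ : xMon c d (xhat σ) = m (valE c d α a (xMon c d (xhat σ))) :=
        ih _ hdegξ (fun n hn h' => hnd n hn (h'.trans hξle))
      have hc₀BA : valE c d α a (xMon c d (xhat σ)) ∈ BA B α := by
        have h2 := xval_mem_BA hα hBgen hdeg hmval hmmin hξ
        rwa [xhat_xMon] at h2
      by_contra hne
      have hτval : valE c d α a (m (valE c d α a σ)) = valE c d α a σ :=
        hmval _ (valE_mem hBgen σ)
      have hτmin : m (valE c d α a σ)
          = m (valE c d α a (m (valE c d α a σ))) := by rw [hτval]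
      have hdcmp₂ : m (valE c d α a σ)
          = xMon c d (xhat (m (valE c d α a σ))) + yMon c d (yhat (m (valE c d α a σ))) :=
        decompE _
      have hξ₂min : xMon c d (xhat (m (valE c d α a σ)))
          = m (valE c d α a (xMon c d (xhat (m (valE c d α a σ))))) :=
        min_divisor hBgen hmval hmmin hdcmp₂ hτmin
      have hc₂BA : valE c d α a (xMon c d (xhat (m (valE c d α a σ)))) ∈ BA B α :=
        xval_mem_BA hα hBgen hdeg hmval hmmin hτmin
      -- abbreviations
      set c₀ := valE c d α a (xMon c d (xhat σ)) with hc₀def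
      set c₂ := valE c d α a (xMon c d (xhat (m (valE c d α a σ)))) with hc₂def
      -- coordinate identity
      have hcoordj : ∀ j, c₀ j + α * yhat σ j
          = c₂ j + α * yhat (m (valE c d α a σ)) j := by
        intro j
        have h1 : valE c d α a σ j = c₀ j + α * yhat σ j := by
          conv_lhs => rw [hdcmp]
          rw [valE_add, Pi.add_apply, hc₀def, valE_yMon]
        have h2 : valE c d α a σ j = c₂ j + α * yhat (m (valE c d α a σ)) j := by
          conv_lhs => rw [← hτval]
          conv_lhs => rw [hdcmp₂]
          rw [valE_add, Pi.add_apply, hc₂def, valE_yMon]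
        omega
      have hrel : Rel α c₀ c₂ := by
        intro j
        refine ⟨(yhat (m (valE c d α a σ)) j : ℤ) - yhat σ j, ?_⟩
        have h1 := hcoordj j
        have h2 : (c₀ j : ℤ) + α * yhat σ j
            = c₂ j + α * yhat (m (valE c d α a σ)) j := by exact_mod_cast h1
        linear_combination h2
      have hc₀ne : c₀ ≠ c₂ := by
        intro hcc
        apply hne
        have hξeq : xMon c d (xhat σ) = xMon c d (xhat (m (valE c d α a σ))) := by
          rw [hξ, hξ₂min, hcc]
        have hxeq : xhat σ = xhat (m (valE c d α a σ)) := by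
          have h2 := congrArg xhat hξeq
          rwa [xhat_xMon, xhat_xMon] at h2
        have hyeq : yhat σ = yhat (m (valE c d α a σ)) := by
          funext j
          have h1 := hcoordj j
          have h2 := congrFun hcc j
          have h3 : α * yhat σ j = α * yhat (m (valE c d α a σ)) j := by omega
          exact Nat.eq_of_mul_eq_mul_left hα h3
        exact finsupp_ext_coords hxeq hyeq
      rcases ltCls_total hc₀ne with hlt | hlt
      · -- `c₀ ≺ c₂` : the minimal monomial `τ` is divisible by an `N₂`-element
        obtain ⟨w, hw⟩ := joinSub_alpha hα hrel
        have hmw : m (joinSub c₀ c₂) = yMon c d w := by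
          have hval : valE c d α a (yMon c d w) = joinSub c₀ c₂ := by
            rw [valE_yMon]; exact funext fun j => (hw j).symm
          rw [← hval]
          exact (pureY_min hα hBgen hdeg hmval hmmin _
            (fun i' => yMon_apply_castAdd w i')).symm
        have hn'le : m c₂ + m (joinSub c₀ c₂) ≤ m (valE c d α a σ) := by
          conv_rhs => rw [hdcmp₂]
          rw [hξ₂min]
          apply add_le_add le_rfl
          rw [hmw, Finsupp.le_def]
          intro v
          induction v using Fin.addCases with
          | left i' => rw [yMon_apply_castAdd]; exact Nat.zero_le _
          | right j' =>
            rw [yMon_apply_natAdd, yMon_apply_natAdd]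
            have h1 := hcoordj j'
            have h2 := hw j'
            have h3 : joinSub c₀ c₂ j' = max (c₀ j') (c₂ j') - c₂ j' := rfl
            have h4 : α * w j' ≤ α * yhat (m (valE c d α a σ)) j' := by omega
            exact Nat.le_of_mul_le_mul_left h4 hα
        obtain ⟨ρ, hρ⟩ := le_iff_exists_add.mp hn'le
        have hn'ne : m c₂ + m (joinSub c₀ c₂)
            ≠ m (valE c d α a (m c₂ + m (joinSub c₀ c₂))) :=
          n2_ne_min hα hBgen hdeg hmval hmmin hc₀BA hc₂BA hrel hlt
        have hgl : grevlex (m (valE c d α a (m c₂ + m (joinSub c₀ c₂))))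
            (m c₂ + m (joinSub c₀ c₂)) := by
          rcases hmmin (valE c d α a (m c₂ + m (joinSub c₀ c₂)))
              (valE_mem hBgen _) (m c₂ + m (joinSub c₀ c₂)) rfl with h | h
          · exact absurd h.symm hn'ne
          · exact h
        have hμval : valE c d α a (m (valE c d α a (m c₂ + m (joinSub c₀ c₂))) + ρ)
            = valE c d α a σ := by
          rw [valE_add, hmval _ (valE_mem hBgen _), ← valE_add, ← hρ, hτval]
        have hglμ : grevlex (m (valE c d α a (m c₂ + m (joinSub c₀ c₂))) + ρ)
            (m (valE c d α a σ)) := by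
          rw [hρ]
          exact grevlex_add_right ρ hgl
        rcases hmmin (valE c d α a σ) (valE_mem hBgen σ) _ hμval with h | h
        · rw [← h] at hglμ
          exact grevlex_irrefl _ hglμ
        · exact grevlex_asymm h hglμ
      · -- `c₂ ≺ c₀` : `σ` itself is divisible by an `N₂`-element
        obtain ⟨w, hw⟩ := joinSub_alpha hα (rel_symm hrel)
        have hmw : m (joinSub c₂ c₀) = yMon c d w := by
          have hval : valE c d α a (yMon c d w) = joinSub c₂ c₀ := by
            rw [valE_yMon]; exact funext fun j => (hw j).symm
          rw [← hval]
          exact (pureY_min hα hBgen hdeg hmval hmmin _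
            (fun i' => yMon_apply_castAdd w i')).symm
        have hnle : m c₀ + m (joinSub c₂ c₀) ≤ σ := by
          conv_rhs => rw [hdcmp]
          rw [hξ]
          apply add_le_add le_rfl
          rw [hmw, Finsupp.le_def]
          intro v
          induction v using Fin.addCases with
          | left i' => rw [yMon_apply_castAdd]; exact Nat.zero_le _
          | right j' =>
            rw [yMon_apply_natAdd, yMon_apply_natAdd]
            have h1 := hcoordj j'
            have h2 := hw j'
            have h3 : joinSub c₂ c₀ j' = max (c₂ j') (c₀ j') - c₀ j' := rfl
            have h4 : α * w j' ≤ α * yhat σ j' := by omega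
            exact Nat.le_of_mul_le_mul_left h4 hα
        refine hnd (m c₀ + m (joinSub c₂ c₀)) (Or.inr ?_) hnle
        exact ⟨{y | y ∈ BA B α ∧ Rel α c₀ y}, ⟨c₀, hc₀BA, rfl⟩,
          c₂, ⟨hc₂BA, hrel⟩, c₀, ⟨hc₀BA, rel_refl c₀⟩, hlt, rfl⟩

end Core

section Pi

variable {c d α : ℕ} {a : Fin c → Fin d → ℕ} {B : AddSubmonoid (Fin d → ℕ)}
  {m : (Fin d → ℕ) → (Fin (c + d) →₀ ℕ)}
  {K : Type*} [Field K]

lemma pi_monomial (π : MvPolynomial (Fin (c + d)) K →ₐ[K] AddMonoidAlgebra K (Fin d → ℕ))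
    (hπ : ∀ v, π (MvPolynomial.X v) = AddMonoidAlgebra.of' K (Fin d → ℕ) (gens c d α a v))
    (τ : Fin (c + d) →₀ ℕ) (r : K) :
    π (MvPolynomial.monomial τ r) = AddMonoidAlgebra.single (valE c d α a τ) r := by
  rw [MvPolynomial.monomial_eq, map_mul]
  have hC : π (MvPolynomial.C r) = AddMonoidAlgebra.single 0 r := by
    rw [← MvPolynomial.algebraMap_eq, AlgHom.commutes, AddMonoidAlgebra.coe_algebraMap]
    simp
  have hprod : π (τ.prod fun v e => MvPolynomial.X v ^ e)
      = AddMonoidAlgebra.single (valE c d α a τ) 1 := by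
    rw [map_finsuppProd]
    have h1 : ∀ v ∈ τ.support,
        π (MvPolynomial.X v ^ τ v) = AddMonoidAlgebra.single (τ v • gens c d α a v) 1 := by
      intro v _
      rw [map_pow, hπ, AddMonoidAlgebra.of'_apply, AddMonoidAlgebra.single_pow, one_pow]
    rw [Finsupp.prod_congr (g2 := fun v e => AddMonoidAlgebra.single (e • gens c d α a v) (1:K)) h1, Finsupp.prod, AddMonoidAlgebra.prod_single, Finset.prod_const_one]
    have h2 : ∑ v ∈ τ.support, τ v • gens c d α a v = valE c d α a τ := by
      rw [valE]
      apply Finset.sum_subset (Finset.subset_univ _)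
      intro v _ hv
      rw [Finsupp.notMem_support_iff.mp hv, zero_smul]
    rw [h2]
  rw [hC, hprod, AddMonoidAlgebra.single_mul_single, zero_add, mul_one]

lemma lead_not_min (hBgen : B = AddSubmonoid.closure (Set.range a ∪ Set.range (eVec d α)))
    (hmval : ∀ b ∈ B, valE c d α a (m b) = b)
    (hmmin : ∀ b ∈ B, ∀ σ, valE c d α a σ = b → m b = σ ∨ grevlex (m b) σ)
    (π : MvPolynomial (Fin (c + d)) K →ₐ[K] AddMonoidAlgebra K (Fin d → ℕ))
    (hπ : ∀ v, π (MvPolynomial.X v) = AddMonoidAlgebra.of' K (Fin d → ℕ) (gens c d α a v))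
    {f : MvPolynomial (Fin (c + d)) K} {σ' : Fin (c + d) →₀ ℕ}
    (hf : π f = 0) (hl : IsLeadMon f σ') :
    σ' ≠ m (valE c d α a σ') := by
  have hexp : ∃ τ ∈ f.support, τ ≠ σ' ∧ valE c d α a τ = valE c d α a σ' := by
    by_contra hc
    push_neg at hc
    have h0 : (π f).coeff (valE c d α a σ') = 0 := by rw [hf]; rfl
    have h1 : π f = ∑ τ ∈ f.support,
        AddMonoidAlgebra.single (valE c d α a τ) (MvPolynomial.coeff τ f) := by
      conv_lhs => rw [f.as_sum, map_sum]
      exact Finset.sum_congr rfl fun τ _ => pi_monomial π hπ τ _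
    rw [h1, AddMonoidAlgebra.coeff_sum, Finsupp.finset_sum_apply] at h0
    simp only [AddMonoidAlgebra.coeff_single] at h0
    rw [Finset.sum_eq_single_of_mem σ' hl.1 ?_] at h0
    · rw [Finsupp.single_apply, if_pos rfl] at h0
      exact (MvPolynomial.mem_support_iff.mp hl.1) h0
    · intro τ hτ hτne
      rw [Finsupp.single_apply, if_neg (hc τ hτ hτne)]
  obtain ⟨τ, hτs, hτne, hτval⟩ := hexp
  intro heq
  rcases hl.2 τ hτs with h | h
  · exact hτne h
  · rcases hmmin (valE c d α a σ') (valE_mem hBgen σ') τ hτval with h' | h'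
    · rw [← heq] at h'
      exact hτne h'.symm
    · rw [← heq] at h'
      exact grevlex_asymm h' h

lemma nonmin_lead (hBgen : B = AddSubmonoid.closure (Set.range a ∪ Set.range (eVec d α)))
    (hmval : ∀ b ∈ B, valE c d α a (m b) = b)
    (hmmin : ∀ b ∈ B, ∀ σ, valE c d α a σ = b → m b = σ ∨ grevlex (m b) σ)
    (π : MvPolynomial (Fin (c + d)) K →ₐ[K] AddMonoidAlgebra K (Fin d → ℕ))
    (hπ : ∀ v, π (MvPolynomial.X v) = AddMonoidAlgebra.of' K (Fin d → ℕ) (gens c d α a v))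
    {σ : Fin (c + d) →₀ ℕ} (hne : σ ≠ m (valE c d α a σ)) :
    ∃ f, π f = 0 ∧ IsLeadMon f σ := by
  classical
  set b := valE c d α a σ with hbdef
  refine ⟨MvPolynomial.monomial σ (1 : K) + MvPolynomial.monomial (m b) (-1 : K), ?_, ?_, ?_⟩
  · rw [map_add, pi_monomial π hπ, pi_monomial π hπ, hmval b (valE_mem hBgen σ), ← hbdef,
      ← AddMonoidAlgebra.single_add, add_neg_cancel, AddMonoidAlgebra.single_zero]
  · rw [MvPolynomial.mem_support_iff, MvPolynomial.coeff_add, MvPolynomial.coeff_monomial,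
      MvPolynomial.coeff_monomial, if_pos rfl, if_neg (fun h => hne h.symm)]
    simp
  · intro τ hτ
    rw [MvPolynomial.mem_support_iff, MvPolynomial.coeff_add, MvPolynomial.coeff_monomial,
      MvPolynomial.coeff_monomial] at hτ
    by_cases h1 : σ = τ
    · exact Or.inl h1.symm
    · rw [if_neg h1] at hτ
      by_cases h2 : m b = τ
      · subst h2
        right
        rcases hmmin b (valE_mem hBgen σ) σ rfl with h' | h'
        · exact absurd h'.symm hne
        · exact h'
      · rw [if_neg h2] at hτ
        simp at hτ

end Pi

lemma rel_trans {d α : ℕ} {x y z : Fin d → ℕ} (h1 : Rel α x y) (h2 : Rel α y z) :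
    Rel α x z := by
  intro j
  have h : (x j : ℤ) - z j = ((x j : ℤ) - y j) + ((y j : ℤ) - z j) := by ring
  rw [h]
  exact dvd_add (h1 j) (h2 j)


/-- `M_{in_≺(ker π)} = ∪_{n ∈ N₁∪N₂} M_{nS}`; in particular the initial
ideal is generated by finitely many elements of `N₁ ∪ N₂`. -/
theorem initial_ideal_eq_multiples_of_N1_union_N2
    (c d α : ℕ) (hα : 0 < α)
    (a : Fin c → Fin d → ℕ) (B : AddSubmonoid (Fin d → ℕ))
    (hBgen : B = AddSubmonoid.closure (Set.range a ∪ Set.range (eVec d α)))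
    (hhilb : Hilb B = Set.range a ∪ Set.range (eVec d α))
    (hdeg : ∀ i, ∑ j, a i j = α)
    (m : (Fin d → ℕ) → (Fin (c + d) →₀ ℕ))
    (hmval : ∀ b ∈ B, valE c d α a (m b) = b)
    (hmmin : ∀ b ∈ B, ∀ σ, valE c d α a σ = b → m b = σ ∨ grevlex (m b) σ)
    (K : Type*) [Field K]
    (π : MvPolynomial (Fin (c + d)) K →ₐ[K] AddMonoidAlgebra K (Fin d → ℕ))
    (hπ : ∀ v, π (MvPolynomial.X v) = AddMonoidAlgebra.of' K (Fin d → ℕ) (gens c d α a v)) :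
    (∀ σ : Fin (c + d) →₀ ℕ,
      MvPolynomial.monomial σ (1 : K) ∈ initialIdeal (RingHom.ker π.toRingHom) ↔
        ∃ n ∈ N1set c d α a B m ∪ N2set c α B m, ∃ ρ, σ = n + ρ) ∧
    ∃ (r : ℕ) (ns : Fin r → (Fin (c + d) →₀ ℕ)),
      (∀ k, ns k ∈ N1set c d α a B m ∪ N2set c α B m) ∧
      initialIdeal (RingHom.ker π.toRingHom)
        = Ideal.span (Set.range fun k => MvPolynomial.monomial (ns k) (1 : K)) := by
  classical
  set I := RingHom.ker π.toRingHom with hIdef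
  have hπ0 : ∀ f, f ∈ I ↔ π f = 0 := fun f => RingHom.mem_ker
  set T : Set (Fin (c + d) →₀ ℕ) := {σ' | ∃ f ∈ I, IsLeadMon f σ'} with hTdef
  have hspan : initialIdeal I
      = Ideal.span ((fun s => MvPolynomial.monomial s (1 : K)) '' T) := by
    rw [initialIdeal]
    congr 1
    ext g
    constructor
    · rintro ⟨f, hf, σ', hl, rfl⟩
      exact ⟨σ', ⟨f, hf, hl⟩, rfl⟩
    · rintro ⟨σ', ⟨f, hf, hl⟩, rfl⟩
      exact ⟨f, hf, σ', hl, rfl⟩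
  have hTne : ∀ σ' ∈ T, σ' ≠ m (valE c d α a σ') := by
    rintro σ' ⟨f, hfI, hl⟩
    exact lead_not_min hBgen hmval hmmin π hπ ((hπ0 f).mp hfI) hl
  have hTdiv : ∀ σ' ∈ T, ∃ n ∈ N1set c d α a B m ∪ N2set c α B m, n ≤ σ' := by
    intro σ' hσ'
    by_contra hc
    push_neg at hc
    exact hTne σ' hσ' (standard_min hα hBgen hdeg hmval hmmin σ'
      (fun n hn hle => hc n hn hle))
  have hNT : ∀ n ∈ N1set c d α a B m ∪ N2set c α B m, n ∈ T := by
    intro n hn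
    have hne : n ≠ m (valE c d α a n) := by
      rcases hn with ⟨i, b, hbBA, heq, hneq⟩ | ⟨Γ, ⟨x, hxBA, hΓ⟩, bi, hbi, bj, hbj, hlt, heq⟩
      · have hval : valE c d α a n = a i + b := by
          rw [heq, valE_add, valE_single_castAdd, hmval b hbBA.1]
        rw [hval]
        exact hneq
      · subst hΓ
        have hrel : Rel α bi bj := rel_trans (rel_symm hbi.2) hbj.2
        rw [heq]
        exact n2_ne_min hα hBgen hdeg hmval hmmin hbi.1 hbj.1 hrel hlt
    obtain ⟨f, hf0, hl⟩ := nonmin_lead hBgen hmval hmmin π hπ hne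
    exact ⟨f, (hπ0 f).mpr hf0, hl⟩
  have hmem : ∀ σ : Fin (c + d) →₀ ℕ,
      MvPolynomial.monomial σ (1 : K) ∈ initialIdeal I ↔
        ∃ n ∈ N1set c d α a B m ∪ N2set c α B m, ∃ ρ, σ = n + ρ := by
    intro σ
    rw [hspan, MvPolynomial.mem_ideal_span_monomial_image]
    constructor
    · intro h
      have hσs : σ ∈ (MvPolynomial.monomial σ (1 : K)).support := by
        rw [MvPolynomial.mem_support_iff, MvPolynomial.coeff_monomial, if_pos rfl]
        exact one_ne_zero
      obtain ⟨σ', hσ'T, hσ'le⟩ := h σ hσs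
      obtain ⟨n, hnN, hnle⟩ := hTdiv σ' hσ'T
      obtain ⟨ρ, hρ⟩ := le_iff_exists_add.mp (hnle.trans hσ'le)
      exact ⟨n, hnN, ρ, hρ⟩
    · rintro ⟨n, hnN, ρ, rfl⟩
      intro xi hxi
      rw [MvPolynomial.mem_support_iff, MvPolynomial.coeff_monomial] at hxi
      by_cases hx : n + ρ = xi
      · exact ⟨n, hNT n hnN, hx ▸ le_self_add⟩
      · rw [if_neg hx] at hxi; exact absurd rfl hxi
  refine ⟨hmem, ?_⟩
  have hJ : initialIdeal I
      = Ideal.span ((fun s => MvPolynomial.monomial s (1 : K))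
          '' (N1set c d α a B m ∪ N2set c α B m)) := by
    apply le_antisymm
    · rw [hspan]
      apply Ideal.span_le.mpr
      rintro g ⟨σ', hσ'T, rfl⟩
      rw [SetLike.mem_coe, MvPolynomial.mem_ideal_span_monomial_image]
      intro xi hxi
      rw [MvPolynomial.mem_support_iff, MvPolynomial.coeff_monomial] at hxi
      by_cases hx : σ' = xi
      · obtain ⟨n, hnN, hnle⟩ := hTdiv σ' hσ'T
        exact ⟨n, hnN, hx ▸ hnle⟩
      · rw [if_neg hx] at hxi; exact absurd rfl hxi
    · apply Ideal.span_le.mpr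
      rintro g ⟨n, hnN, rfl⟩
      exact (hmem n).mpr ⟨n, hnN, 0, (add_zero n).symm⟩
  obtain ⟨G, hG⟩ := IsNoetherian.noetherian (initialIdeal I)
  have hGfin : ∀ g ∈ G, ∃ t : Finset (MvPolynomial (Fin (c + d)) K),
      ↑t ⊆ ((fun s => MvPolynomial.monomial s (1 : K))
          '' (N1set c d α a B m ∪ N2set c α B m)) ∧ g ∈ Ideal.span (↑t : Set _) := by
    intro g hg
    have hgJ : g ∈ initialIdeal I := by
      rw [← hG]
      exact Submodule.subset_span hg
    rw [hJ] at hgJ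
    exact Submodule.mem_span_finite_of_mem_span hgJ
  choose! t ht1 ht2 using hGfin
  set T' := G.biUnion t with hT'def
  have hT'sub : ↑T' ⊆ ((fun s => MvPolynomial.monomial s (1 : K))
      '' (N1set c d α a B m ∪ N2set c α B m)) := by
    intro e he
    obtain ⟨g, hg, hge⟩ := Finset.mem_biUnion.mp (Finset.mem_coe.mp he)
    exact ht1 g hg (Finset.mem_coe.mpr hge)
  have hspanT' : Ideal.span (↑T' : Set _) = initialIdeal I := by
    apply le_antisymm
    · rw [hJ]
      exact Ideal.span_mono hT'sub
    · rw [← hG]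
      apply Ideal.span_le.mpr
      intro g hg
      have h2 := ht2 g hg
      have hsub : (↑(t g) : Set (MvPolynomial (Fin (c + d)) K)) ⊆ (↑T' : Set (MvPolynomial (Fin (c + d)) K)) := by
        intro e he
        exact Finset.mem_coe.mpr (Finset.mem_biUnion.mpr ⟨g, hg, Finset.mem_coe.mp he⟩)
      exact Ideal.span_mono hsub h2
  have hch : ∀ e : {x // x ∈ T'}, ∃ n, n ∈ N1set c d α a B m ∪ N2set c α B m ∧
      MvPolynomial.monomial n (1 : K) = ↑e := by
    intro e
    obtain ⟨n, hn, he⟩ := hT'sub (Finset.mem_coe.mpr e.2)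
    exact ⟨n, hn, he⟩
  choose ns' hns1 hns2 using hch
  refine ⟨T'.card, fun k => ns' (T'.equivFin.symm k), fun k => hns1 _, ?_⟩
  rw [← hspanT']
  congr 1
  ext e
  constructor
  · intro he
    refine ⟨T'.equivFin ⟨e, he⟩, ?_⟩
    show MvPolynomial.monomial (ns' (T'.equivFin.symm (T'.equivFin ⟨e, he⟩))) (1 : K) = e
    rw [show T'.equivFin.symm (T'.equivFin ⟨e, he⟩) = ⟨e, he⟩ from Equiv.symm_apply_apply _ _]
    exact hns2 ⟨e, he⟩
  · rintro ⟨k, rfl⟩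
    show MvPolynomial.monomial (ns' (T'.equivFin.symm k)) (1 : K) ∈ (↑T' : Set _)
    rw [hns2 (T'.equivFin.symm k)]
    exact Finset.mem_coe.mpr (T'.equivFin.symm k).2
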